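/- Let W = (w_1,…,w_n) be a word of length n over {1,…,d} and let k ≥ n+1. Let I = (i_1,…,i_n) and V = (v_1,…,v_n) be words of length n, and assume I is a rearrangement of W. Define the k×k real matrices B_ℓ := A^W_{i_ℓ} if i_ℓ = v_ℓ, and B_ℓ := 0 otherwise, for ℓ = 1,…,n. Then the (1, n+1)-entry of the matrix product B_1 • B_2 • ⋯ • B_n equals 1 if I = W and V = W, and equals 0 otherwise. -/

import Mathlib

/-- `E a b` is the `k × k` real matrix whose `(a,b)`-entry is `1` and all other entries are `0`. -/
def E {k : ℕ} (a b : Fin k) : Matrix (Fin k) (Fin k) ℝ :=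
  Matrix.single a b 1

/-- `A^W_i`: for a word `W` (a list over the alphabet `Fin d`) and `k ≥ |W| + 1`, the matrix
`∑_{ℓ : w_ℓ = i} (E^ℓ_{ℓ+1} - E^{ℓ+1}_ℓ)` (zero-based positions). -/
def AW {d k : ℕ} (W : List (Fin d)) (hk : W.length + 1 ≤ k) (i : Fin d) :
    Matrix (Fin k) (Fin k) ℝ :=
  ∑ ℓ : Fin W.length,
    if W.get ℓ = i then
      E ⟨ℓ.1, by have := ℓ.2; omega⟩ ⟨ℓ.1 + 1, by have := ℓ.2; omega⟩ -
        E ⟨ℓ.1 + 1, by have := ℓ.2; omega⟩ ⟨ℓ.1, by have := ℓ.2; omega⟩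
    else 0

lemma AW_apply_far {d k : ℕ} (W : List (Fin d)) (hk : W.length + 1 ≤ k) (i : Fin d)
    (a b : Fin k) (h : a.1 + 1 < b.1) : AW W hk i a b = 0 := by
  unfold AW
  rw [Matrix.sum_apply]
  apply Finset.sum_eq_zero
  intro ℓ _
  split
  · simp only [Matrix.sub_apply, E, Matrix.single, Matrix.of_apply, Fin.ext_iff]
    split_ifs with h1 h2 h2 <;> simp_all <;> omega
  · rfl

lemma AW_apply_succ {d k : ℕ} (W : List (Fin d)) (hk : W.length + 1 ≤ k) (i : Fin d)
    (s : ℕ) (hs : s < W.length) (h1 : s < k) (h2 : s + 1 < k) :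
    AW W hk i ⟨s, h1⟩ ⟨s + 1, h2⟩ = if W.get ⟨s, hs⟩ = i then 1 else 0 := by
  unfold AW
  rw [Matrix.sum_apply]
  rw [Finset.sum_eq_single (⟨s, hs⟩ : Fin W.length)]
  · split
    · simp only [Matrix.sub_apply, E, Matrix.single, Matrix.of_apply, Fin.ext_iff]
      norm_num
    · rfl
  · intro ℓ _ hne
    split
    · simp only [Matrix.sub_apply, E, Matrix.single, Matrix.of_apply, Fin.ext_iff]
      have : ℓ.1 ≠ s := fun h => hne (Fin.ext h)
      split_ifs <;> simp_all <;> omega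
    · rfl
  · simp

lemma key {n k : ℕ} (f : Fin n → Matrix (Fin k) (Fin k) ℝ) (c : ℕ → ℝ)
    (hz : ∀ ℓ : Fin n, ∀ a b : Fin k, a.1 + 1 < b.1 → f ℓ a b = 0)
    (hd : ∀ ℓ : Fin n, ∀ (h1 : ℓ.1 < k) (h2 : ℓ.1 + 1 < k),
      f ℓ ⟨ℓ.1, h1⟩ ⟨ℓ.1 + 1, h2⟩ = c ℓ.1)
    (s : ℕ) (hs : s ≤ n) (h0 : 0 < k) :
    (∀ q : Fin k, s < q.1 → ((List.ofFn f).take s).prod ⟨0, h0⟩ q = 0) ∧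
    (∀ hq : s < k, ((List.ofFn f).take s).prod ⟨0, h0⟩ ⟨s, hq⟩ =
      ∏ ℓ ∈ Finset.range s, c ℓ) := by
  induction s with
  | zero =>
    constructor
    · intro q hq
      simp only [List.take_zero, List.prod_nil]
      rw [Matrix.one_apply_ne]
      exact fun h => by rw [← h] at hq; exact Nat.lt_irrefl 0 hq
    · intro hq
      simp only [List.take_zero, List.prod_nil, Finset.range_zero, Finset.prod_empty]
      rw [Matrix.one_apply_eq]
  | succ s ih =>
    have hsn : s < n := by omega
    obtain ⟨ih1, ih2⟩ := ih (by omega)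
    have hlen : s < (List.ofFn f).length := by simp [hsn]
    have hstep : ((List.ofFn f).take (s + 1)).prod =
        ((List.ofFn f).take s).prod * f ⟨s, hsn⟩ := by
      rw [List.prod_take_succ _ s hlen]
      congr 1
      simp
    constructor
    · intro q hq
      rw [hstep, Matrix.mul_apply]
      apply Finset.sum_eq_zero
      intro p _
      by_cases hp : s < p.1
      · rw [ih1 p hp, zero_mul]
      · rw [hz ⟨s, hsn⟩ p q (by omega), mul_zero]
    · intro hq
      rw [hstep, Matrix.mul_apply]
      rw [Finset.sum_eq_single (⟨s, by omega⟩ : Fin k)]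
      · rw [ih2 (by omega), hd ⟨s, hsn⟩ (by simp only [Fin.val_mk]; omega) hq, Finset.prod_range_succ]
      · intro p _ hne
        by_cases hp : s < p.1
        · rw [ih1 p hp, zero_mul]
        · have : p.1 < s := by
            rcases Nat.lt_or_ge p.1 s with h | h
            · exact h
            · exact absurd (Fin.ext (by simp only [Fin.val_mk]; omega)) hne
          rw [hz ⟨s, hsn⟩ p ⟨s + 1, hq⟩ (by simp only [Fin.val_mk]; omega), mul_zero]
      · simp

/-- `I` is a rearrangement of `J`: same length and same letter multiplicities. -/
def Rearr {d : ℕ} (I J : List (Fin d)) : Prop :=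
  I.length = J.length ∧ ∀ i : Fin d, I.count i = J.count i

/-- with `B_ℓ := A^W_{i_ℓ}` if `i_ℓ = v_ℓ` and `B_ℓ := 0` otherwise, and `I` a
rearrangement of `W`, the `(1, n+1)`-entry of `B_1 ⬝ ⋯ ⬝ B_n` is `1` if `I = W` and `V = W`,
and `0` otherwise. -/
theorem stmt2 (d k : ℕ) (W I V : List (Fin d)) (hk : W.length + 1 ≤ k)
    (hI : I.length = W.length) (hV : V.length = W.length) (hre : Rearr I W) :
    (List.ofFn fun ℓ : Fin W.length =>
        if I.get (Fin.cast hI.symm ℓ) = V.get (Fin.cast hV.symm ℓ) then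
          AW W hk (I.get (Fin.cast hI.symm ℓ))
        else 0).prod ⟨0, by omega⟩ ⟨W.length, by omega⟩ =
      if I = W ∧ V = W then 1 else 0 := by
  classical
  set n := W.length with hn
  set f : Fin n → Matrix (Fin k) (Fin k) ℝ := fun ℓ =>
    if I.get (Fin.cast hI.symm ℓ) = V.get (Fin.cast hV.symm ℓ) then
      AW W hk (I.get (Fin.cast hI.symm ℓ)) else 0 with hf
  set c : ℕ → ℝ := fun m => if h : m < n then
      (if I.get (Fin.cast hI.symm ⟨m, h⟩) = V.get (Fin.cast hV.symm ⟨m, h⟩) ∧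
          W.get ⟨m, h⟩ = I.get (Fin.cast hI.symm ⟨m, h⟩) then 1 else 0)
    else 0 with hc
  have hcv : ∀ ℓ : Fin n, c ℓ.1 =
      if I.get (Fin.cast hI.symm ℓ) = V.get (Fin.cast hV.symm ℓ) ∧
          W.get ℓ = I.get (Fin.cast hI.symm ℓ) then 1 else 0 := by
    intro ℓ
    rw [hc]
    dsimp only
    rw [dif_pos ℓ.2]
  have hz : ∀ ℓ : Fin n, ∀ a b : Fin k, a.1 + 1 < b.1 → f ℓ a b = 0 := by
    intro ℓ a b h
    rw [hf]
    dsimp only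
    split
    · exact AW_apply_far W hk _ a b h
    · rfl
  have hd : ∀ ℓ : Fin n, ∀ (h1 : ℓ.1 < k) (h2 : ℓ.1 + 1 < k),
      f ℓ ⟨ℓ.1, h1⟩ ⟨ℓ.1 + 1, h2⟩ = c ℓ.1 := by
    intro ℓ h1 h2
    rw [hcv ℓ, hf]
    dsimp only
    by_cases hiv : I.get (Fin.cast hI.symm ℓ) = V.get (Fin.cast hV.symm ℓ)
    · rw [if_pos hiv, AW_apply_succ W hk _ ℓ.1 ℓ.2 h1 h2]
      simp only [Fin.eta]
      by_cases hw : W.get ℓ = I.get (Fin.cast hI.symm ℓ)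
      · rw [if_pos hw, if_pos (And.intro hiv hw)]
      · rw [if_neg hw, if_neg (fun h => hw h.2)]
    · rw [if_neg hiv, if_neg (fun h => hiv h.1)]
      rfl
  have hkey := (key f c hz hd n le_rfl (by omega)).2 (by omega)
  rw [List.take_of_length_le (le_of_eq (List.length_ofFn (f := f)))] at hkey
  rw [hkey, ← Fin.prod_univ_eq_prod_range,
    Finset.prod_congr rfl (fun ℓ _ => hcv ℓ), Finset.prod_boole]
  have hiff : (∀ ℓ ∈ Finset.univ,
      I.get (Fin.cast hI.symm ℓ) = V.get (Fin.cast hV.symm ℓ) ∧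
        W.get ℓ = I.get (Fin.cast hI.symm ℓ)) ↔ (I = W ∧ V = W) := by
    constructor
    · intro h
      have hIW : I = W := by
        apply List.ext_get hI
        intro m h1 h2
        exact ((h ⟨m, h2⟩ (Finset.mem_univ _)).2).symm
      have hVW : V = W := by
        apply List.ext_get hV
        intro m h1 h2
        have hm := h ⟨m, h2⟩ (Finset.mem_univ _)
        exact hm.1.symm.trans hm.2.symm
      exact ⟨hIW, hVW⟩
    · rintro ⟨h1, h2⟩
      subst h1; subst h2
      intro ℓ _
      exact ⟨rfl, rfl⟩
  split_ifs with ha hb hb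
  · rfl
  · exact absurd (hiff.1 ha) hb
  · exact absurd (hiff.2 hb) ha
  · rfl
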